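/- Let Φ be a reduced irreducible root system in ℝ^d with d ≥ 2, and let L ⊆ ℂ^d be a 2-dimensional ℂ-linear subspace such that L ⊄ ker θ_ℂ for every θ ∈ Φ. Then every fiber Φ_k of the L-induced decomposition satisfies Φ ∩ span_ℝ Φ_k = Φ_k; in particular each Φ_k is a root subsystem of Φ closed under taking negatives. -/
import Mathlib


noncomputable section

/-- The standard inner product on `ℝ^d`. -/
def dotR {d : ℕ} (x y : Fin d → ℝ) : ℝ := ∑ i, x i * y i

/-- `Φ` is a root system in `ℝ^d`: a finite set of nonzero vectors spanning `ℝ^d`,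
closed under the reflections `s_α`, with integral Cartan numbers. -/
def IsRootSystem {d : ℕ} (Φ : Finset (Fin d → ℝ)) : Prop :=
  (∀ α ∈ Φ, α ≠ 0) ∧
  Submodule.span ℝ (Φ : Set (Fin d → ℝ)) = ⊤ ∧
  (∀ α ∈ Φ, ∀ β ∈ Φ, β - (2 * dotR β α / dotR α α) • α ∈ Φ) ∧
  (∀ α ∈ Φ, ∀ β ∈ Φ, ∃ n : ℤ, 2 * dotR β α / dotR α α = (n : ℝ))

/-- `Φ` is reduced: the only multiples of a root `α` in `Φ` are `±α`. -/
def IsReducedRS {d : ℕ} (Φ : Finset (Fin d → ℝ)) : Prop :=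
  ∀ α ∈ Φ, ∀ t : ℝ, t • α ∈ Φ → t = 1 ∨ t = -1

/-- `Φ` is irreducible: it is not the disjoint union of two nonempty mutually
orthogonal subsets. -/
def IsIrreducibleRS {d : ℕ} (Φ : Finset (Fin d → ℝ)) : Prop :=
  ∀ A B : Set (Fin d → ℝ), (Φ : Set (Fin d → ℝ)) = A ∪ B → Disjoint A B →
    (∀ a ∈ A, ∀ b ∈ B, dotR a b = 0) → A = ∅ ∨ B = ∅

/-- The complexification `θ_ℂ : ℂ^d → ℂ` of the linear functional `z ↦ Σ θᵢ zᵢ`. -/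
def thetaC {d : ℕ} (θ : Fin d → ℝ) (z : Fin d → ℂ) : ℂ := ∑ i, (θ i : ℂ) * z i

/-- The kernel of `θ_ℂ`, as a complex subspace of `ℂ^d`. -/
def kerC {d : ℕ} (θ : Fin d → ℝ) : Submodule ℂ (Fin d → ℂ) where
  carrier := {z | thetaC θ z = 0}
  add_mem' := by
    intro a b ha hb
    simp only [Set.mem_setOf_eq, thetaC] at *
    simp [Pi.add_apply, mul_add, Finset.sum_add_distrib, ha, hb]
  zero_mem' := by simp [thetaC]
  smul_mem' := by
    intro c z hz
    simp only [Set.mem_setOf_eq, thetaC] at *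
    have h : ∑ i, (θ i : ℂ) * (c • z) i = c * ∑ i, (θ i : ℂ) * z i := by
      rw [Finset.mul_sum]
      exact Finset.sum_congr rfl (fun i _ => by simp [Pi.smul_apply, smul_eq_mul]; ring)
    rw [h, hz, mul_zero]

namespace Stmt1Aux

variable {d : ℕ}

/-- `thetaC θ` as a `ℂ`-linear map. -/
def linC (θ : Fin d → ℝ) : (Fin d → ℂ) →ₗ[ℂ] ℂ where
  toFun := thetaC θ
  map_add' a b := by
    simp [thetaC, mul_add, Finset.sum_add_distrib]
  map_smul' c z := by
    simp only [thetaC, Pi.smul_apply, smul_eq_mul, RingHom.id_apply, Finset.mul_sum]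
    exact Finset.sum_congr rfl fun i _ => by ring

lemma mem_kerC {θ : Fin d → ℝ} {z : Fin d → ℂ} : z ∈ kerC θ ↔ thetaC θ z = 0 := Iff.rfl

@[simp] lemma linC_apply (θ : Fin d → ℝ) (z : Fin d → ℂ) : linC θ z = thetaC θ z := rfl

@[simp] lemma thetaC_zero (θ : Fin d → ℝ) : thetaC θ (0 : Fin d → ℂ) = 0 := by simp [thetaC]

lemma kerC_neg (θ : Fin d → ℝ) : kerC (-θ) = kerC θ := by
  ext z
  simp only [mem_kerC, thetaC]
  have h : ∀ i ∈ Finset.univ, ((-θ) i : ℂ) * z i = -((θ i : ℂ) * z i) := by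
    intro i _; simp only [Pi.neg_apply]; push_cast; ring
  rw [Finset.sum_congr rfl h, Finset.sum_neg_distrib, neg_eq_zero]

/-- There is a nonzero vector in `kerC θ₀ ⊓ L` when `L` is 2-dimensional. -/
lemma exists_nonzero (L : Submodule ℂ (Fin d → ℂ)) (hL : Module.finrank ℂ L = 2)
    (θ₀ : Fin d → ℝ) : ∃ v ∈ kerC θ₀ ⊓ L, v ≠ 0 := by
  by_contra h
  push_neg at h
  have hbot : kerC θ₀ ⊓ L = ⊥ := by
    rw [Submodule.eq_bot_iff]
    exact fun x hx => h x hx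
  set g := (linC θ₀).comp L.subtype with hg
  have hginj : Function.Injective g := by
    rw [← LinearMap.ker_eq_bot, Submodule.eq_bot_iff]
    intro x hx
    have hx' : (x : Fin d → ℂ) ∈ kerC θ₀ ⊓ L := ⟨hx, x.2⟩
    rw [hbot] at hx'
    exact Subtype.ext hx'
  have hle := LinearMap.finrank_le_finrank_of_injective hginj
  rw [hL, Module.finrank_self] at hle
  omega

/-- If `L ⊄ ker θ_ℂ` and `v` is a nonzero vector of `kerC θ ⊓ L`, then
`kerC θ ⊓ L = span {v}`. -/
lemma inf_eq_span (L : Submodule ℂ (Fin d → ℂ)) (hL : Module.finrank ℂ L = 2)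
    {θ : Fin d → ℝ} (hθL : ¬ L ≤ kerC θ) {v : Fin d → ℂ}
    (hv : v ∈ kerC θ ⊓ L) (hv0 : v ≠ 0) :
    kerC θ ⊓ L = Submodule.span ℂ {v} := by
  obtain ⟨u, huL, huk⟩ : ∃ u ∈ L, u ∉ kerC θ := by
    by_contra h
    push_neg at h
    exact hθL fun x hx => h x hx
  have hu0 : thetaC θ u ≠ 0 := huk
  set v' : L := ⟨v, hv.2⟩ with hv'
  set u' : L := ⟨u, huL⟩ with hu'
  have hli : LinearIndependent ℂ ![v', u'] := by
    rw [LinearIndependent.pair_iff]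
    intro s t hst
    have h1 : s • v + t • u = 0 := by
      have := congrArg (Subtype.val) hst
      simpa using this
    have h2 : s * thetaC θ v + t * thetaC θ u = 0 := by
      have := congrArg (linC θ) h1
      simpa [map_add, map_smul, smul_eq_mul] using this
    have hvk : thetaC θ v = 0 := hv.1
    rw [hvk, mul_zero, zero_add] at h2
    have ht : t = 0 := by
      rcases mul_eq_zero.mp h2 with h | h
      · exact h
      · exact absurd h hu0
    subst ht
    rw [zero_smul, add_zero] at h1
    have hs : s = 0 := by
      rcases smul_eq_zero.mp h1 with h | h
      · exact h
      · exact absurd h hv0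
    exact ⟨hs, rfl⟩
  have hspan : Submodule.span ℂ {v', u'} = (⊤ : Submodule ℂ L) := by
    have hb := (basisOfLinearIndependentOfCardEqFinrank hli (by simp [hL])).span_eq
    rw [coe_basisOfLinearIndependentOfCardEqFinrank] at hb
    have hr : Set.range ![v', u'] = {v', u'} := by
      ext x
      simp only [Set.mem_range, Fin.exists_fin_two, Matrix.cons_val_zero, Matrix.cons_val_one,
        Matrix.head_cons, Set.mem_insert_iff, Set.mem_singleton_iff]
      tauto
    rw [hr] at hb
    exact hb
  refine le_antisymm ?_ (Submodule.span_le.mpr ?_)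
  · intro w hw
    have hw' : (⟨w, hw.2⟩ : L) ∈ Submodule.span ℂ ({v', u'} : Set L) := by
      rw [hspan]; trivial
    obtain ⟨a, c, hac⟩ := Submodule.mem_span_pair.mp hw'
    have hac' : a • v + c • u = w := by
      have := congrArg (Subtype.val) hac
      simpa using this
    have h2 : a * thetaC θ v + c * thetaC θ u = thetaC θ w := by
      have := congrArg (linC θ) hac'
      simpa [map_add, map_smul, smul_eq_mul] using this
    rw [hv.1, mul_zero, zero_add, mem_kerC.mp hw.1] at h2
    have hc : c = 0 := by
      rcases mul_eq_zero.mp h2 with h | h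
      · exact h
      · exact absurd h hu0
    subst hc
    rw [zero_smul, add_zero] at hac'
    rw [Submodule.mem_span_singleton]
    exact ⟨a, hac'⟩
  · rintro x rfl
    exact hv

/-- The set of `θ` with `thetaC θ v = 0`, as a real subspace of `ℝ^d`. -/
def Wsub (v : Fin d → ℂ) : Submodule ℝ (Fin d → ℝ) where
  carrier := {θ | thetaC θ v = 0}
  add_mem' := by
    intro a b ha hb
    simp only [Set.mem_setOf_eq, thetaC] at *
    have h : ∀ i ∈ Finset.univ, ((a + b) i : ℂ) * v i
        = (a i : ℂ) * v i + (b i : ℂ) * v i := by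
      intro i _; simp only [Pi.add_apply]; push_cast; ring
    rw [Finset.sum_congr rfl h, Finset.sum_add_distrib, ha, hb, add_zero]
  zero_mem' := by simp [thetaC]
  smul_mem' := by
    intro c θ hθ
    simp only [Set.mem_setOf_eq, thetaC] at *
    have h : ∀ i ∈ Finset.univ, ((c • θ) i : ℂ) * v i = (c : ℂ) * ((θ i : ℂ) * v i) := by
      intro i _; simp only [Pi.smul_apply, smul_eq_mul]; push_cast; ring
    rw [Finset.sum_congr rfl h, ← Finset.mul_sum, hθ, mul_zero]

end Stmt1Aux

/-- Every fiber `Φ_k = {θ ∈ Φ : ker θ_ℂ ⊓ L = l^{(k)}}` of the `L`-induced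
decomposition satisfies `Φ ∩ span_ℝ Φ_k = Φ_k`; in particular it is closed under negation. -/
theorem stmt1 {d : ℕ} (hd : 2 ≤ d) (Φ : Finset (Fin d → ℝ))
    (hRS : IsRootSystem Φ) (hred : IsReducedRS Φ) (hirr : IsIrreducibleRS Φ)
    (L : Submodule ℂ (Fin d → ℂ)) (hL : Module.finrank ℂ L = 2)
    (hLk : ∀ θ ∈ Φ, ¬ L ≤ kerC θ)
    (θ₀ : Fin d → ℝ) (hθ₀ : θ₀ ∈ Φ)
    (Φk : Set (Fin d → ℝ))
    (hΦk : Φk = {θ : Fin d → ℝ | θ ∈ Φ ∧ kerC θ ⊓ L = kerC θ₀ ⊓ L}) :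
    (Φ : Set (Fin d → ℝ)) ∩ ↑(Submodule.span ℝ Φk) = Φk ∧
    (∀ θ ∈ Φk, -θ ∈ Φk) := by
  open Stmt1Aux in
  subst hΦk
  -- Φ is closed under negation
  obtain ⟨hne, -, hrefl, -⟩ := hRS
  have hΦneg : ∀ θ ∈ Φ, -θ ∈ Φ := by
    intro θ hθ
    have h0 : θ ≠ 0 := hne θ hθ
    have hdot : dotR θ θ ≠ 0 := by
      have hpos : 0 < dotR θ θ := by
        unfold dotR
        apply Finset.sum_pos' (fun i _ => mul_self_nonneg _)
        obtain ⟨i, hi⟩ : ∃ i, θ i ≠ 0 := by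
          by_contra h; push_neg at h; exact h0 (funext h)
        exact ⟨i, Finset.mem_univ i, mul_self_pos.mpr hi⟩
      exact ne_of_gt hpos
    have hr := hrefl θ hθ θ hθ
    have h2 : 2 * dotR θ θ / dotR θ θ = 2 := by field_simp
    rw [h2] at hr
    have : θ - (2 : ℝ) • θ = -θ := by
      ext i; simp; ring
    rwa [this] at hr
  -- a nonzero vector in the line
  obtain ⟨v, hv, hv0⟩ := Stmt1Aux.exists_nonzero L hL θ₀
  have hspan0 : kerC θ₀ ⊓ L = Submodule.span ℂ {v} :=
    Stmt1Aux.inf_eq_span L hL (hLk θ₀ hθ₀) hv hv0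
  constructor
  · apply Set.Subset.antisymm
    · rintro θ ⟨hθΦ, hθspan⟩
      have hW : Submodule.span ℝ {θ : Fin d → ℝ | θ ∈ Φ ∧ kerC θ ⊓ L = kerC θ₀ ⊓ L}
          ≤ Stmt1Aux.Wsub v := by
        apply Submodule.span_le.mpr
        rintro x ⟨-, hxker⟩
        have hvx : v ∈ kerC x ⊓ L := by rw [hxker]; exact hv
        exact hvx.1
      have hθW : thetaC θ v = 0 := hW hθspan
      have hvθ : v ∈ kerC θ ⊓ L := ⟨hθW, hv.2⟩
      have : kerC θ ⊓ L = Submodule.span ℂ {v} :=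
        Stmt1Aux.inf_eq_span L hL (hLk θ hθΦ) hvθ hv0
      exact ⟨hθΦ, by rw [this, hspan0]⟩
    · rintro θ ⟨hθΦ, hθker⟩
      exact ⟨hθΦ, Submodule.subset_span ⟨hθΦ, hθker⟩⟩
  · rintro θ ⟨hθΦ, hθker⟩
    exact ⟨hΦneg θ hθΦ, by rw [Stmt1Aux.kerC_neg]; exact hθker⟩

end
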